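/- For the +−+− distribution on ℝ (masses 0.01, 0.49, 0.49, 0.01 on intervals [−7.5,−7], [−7,0], [0,7], [7,7.5] with classes +, −, +, −), the three-threshold classifier predicting + on [−7.5,−7), − on [−7,0), + on [0,7), − on [7,7.5] achieves zero expected error; hence the minimal error over the class of piecewise-constant classifiers with at most three thresholds is 0, strictly smaller than the minimal error 0.02 over single-threshold classifiers. -/

import Mathlib

open MeasureTheory

/-- Density of the +−+− distribution: mass 0.01 on [−7.5,−7) (class +),
0.49 on [−7,0) (class −), 0.49 on [0,7) (class +), 0.01 on [7,7.5] (class −). -/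
noncomputable def pmpmDensity (x : ℝ) : ℝ :=
  if -7.5 ≤ x ∧ x < -7 then 0.02
  else if -7 ≤ x ∧ x < 0 then 0.07
  else if 0 ≤ x ∧ x < 7 then 0.07
  else if 7 ≤ x ∧ x ≤ 7.5 then 0.02
  else 0

/-- True label of the +−+− distribution (`true` = class +). -/
noncomputable def pmpmLabel (x : ℝ) : Bool :=
  if x < -7 then true else if x < 0 then false else if x < 7 then true else false

/-- Single-threshold classifier: label `o` on `(−∞, t)`, `!o` on `[t, ∞)`. -/
noncomputable def thresholdPred (t : ℝ) (o : Bool) (x : ℝ) : Bool :=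
  if x < t then o else !o

/-- Three-threshold (piecewise constant, four-interval) classifier. -/
noncomputable def threeThresholdPred (t₁ t₂ t₃ : ℝ) (l : Fin 4 → Bool) (x : ℝ) : Bool :=
  if x < t₁ then l 0 else if x < t₂ then l 1 else if x < t₃ then l 2 else l 3

/-- Expected zero-one error of a classifier `c` on the +−+− distribution. -/
noncomputable def classifierErr (c : ℝ → Bool) : ℝ :=
  ∫ x, pmpmDensity x * (if c x = pmpmLabel x then 0 else 1)

/-! ### Auxiliary definitions and lemmas -/

open Set

noncomputable def indo (a b k : ℝ) : ℝ → ℝ := (Set.Ico a b).indicator fun _ => k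
noncomputable def indc (a b k : ℝ) : ℝ → ℝ := (Set.Icc a b).indicator fun _ => k

lemma indo_integrable (a b k : ℝ) : Integrable (indo a b k) := by
  rw [indo, integrable_indicator_iff measurableSet_Ico]
  exact integrableOn_const (by simp [Real.volume_Ico])

lemma indc_integrable (a b k : ℝ) : Integrable (indc a b k) := by
  rw [indc, integrable_indicator_iff measurableSet_Icc]
  exact integrableOn_const (by simp [Real.volume_Icc])

lemma indo_integral (a b k : ℝ) (h : a ≤ b) : ∫ x, indo a b k x = k * (b - a) := by
  rw [indo, integral_indicator_const _ measurableSet_Ico, Real.volume_real_Ico_of_le h,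
    smul_eq_mul, mul_comm]

lemma indc_integral (a b k : ℝ) (h : a ≤ b) : ∫ x, indc a b k x = k * (b - a) := by
  rw [indc, integral_indicator_const _ measurableSet_Icc, Real.volume_real_Icc_of_le h,
    smul_eq_mul, mul_comm]

lemma density_eq : pmpmDensity = fun x =>
    indo (-7.5) (-7) 0.02 x + indo (-7) 0 0.07 x + indo 0 7 0.07 x + indc 7 7.5 0.02 x := by
  funext x
  simp only [pmpmDensity, indo, indc, indicator_apply, mem_Ico, mem_Icc]
  split_ifs <;> (try push_neg at *) <;> simp_all <;> linarith

lemma density_integrable : Integrable pmpmDensity := by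
  rw [density_eq]
  exact (((indo_integrable _ _ _).add (indo_integrable _ _ _)).add
    (indo_integrable _ _ _)).add (indc_integrable _ _ _)

lemma density_measurable : Measurable pmpmDensity :=
  Measurable.ite measurableSet_Ico measurable_const <|
  Measurable.ite measurableSet_Ico measurable_const <|
  Measurable.ite measurableSet_Ico measurable_const <|
  Measurable.ite measurableSet_Icc measurable_const measurable_const

lemma density_nonneg (x : ℝ) : 0 ≤ pmpmDensity x := by
  unfold pmpmDensity; split_ifs <;> norm_num

lemma label_measurable : Measurable pmpmLabel :=
  Measurable.ite measurableSet_Iio measurable_const <|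
  Measurable.ite measurableSet_Iio measurable_const <|
  Measurable.ite measurableSet_Iio measurable_const measurable_const

noncomputable def eFun (c : ℝ → Bool) (x : ℝ) : ℝ :=
  pmpmDensity x * (if c x = pmpmLabel x then 0 else 1)

lemma classifierErr_eq (c : ℝ → Bool) : classifierErr c = ∫ x, eFun c x := rfl

lemma eFun_nonneg (c : ℝ → Bool) (x : ℝ) : 0 ≤ eFun c x :=
  mul_nonneg (density_nonneg x) (by split_ifs <;> norm_num)

lemma eFun_eq {c : ℝ → Bool} {x k : ℝ} (hd : pmpmDensity x = k)
    (hne : c x ≠ pmpmLabel x) : eFun c x = k := by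
  rw [eFun, if_neg hne, hd, mul_one]

lemma eFun_integrable {c : ℝ → Bool} (hc : Measurable c) : Integrable (eFun c) := by
  have hm : Measurable (eFun c) :=
    density_measurable.mul
      (Measurable.ite (measurableSet_eq_fun hc label_measurable)
        measurable_const measurable_const)
  refine density_integrable.mono' hm.aestronglyMeasurable (Filter.Eventually.of_forall fun x => ?_)
  rw [Real.norm_eq_abs, abs_of_nonneg (eFun_nonneg c x), eFun]
  have h1 : (if c x = pmpmLabel x then (0:ℝ) else 1) ≤ 1 := by split_ifs <;> norm_num
  calc pmpmDensity x * (if c x = pmpmLabel x then (0:ℝ) else 1)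
      ≤ pmpmDensity x * 1 := mul_le_mul_of_nonneg_left h1 (density_nonneg x)
    _ = pmpmDensity x := mul_one _

lemma threshold_measurable (t : ℝ) (o : Bool) : Measurable (thresholdPred t o) :=
  Measurable.ite measurableSet_Iio measurable_const measurable_const

/- interval facts -/
lemma dA {x : ℝ} (h1 : -7.5 ≤ x) (h2 : x < -7) :
    pmpmDensity x = 0.02 ∧ pmpmLabel x = true := by
  unfold pmpmDensity pmpmLabel
  rw [if_pos ⟨h1, h2⟩, if_pos (by linarith : x < -7)]; exact ⟨rfl, rfl⟩

lemma dB {x : ℝ} (h1 : -7 ≤ x) (h2 : x < 0) :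
    pmpmDensity x = 0.07 ∧ pmpmLabel x = false := by
  unfold pmpmDensity pmpmLabel
  rw [if_neg (by rintro ⟨_, h⟩; linarith), if_pos ⟨h1, h2⟩,
    if_neg (by linarith : ¬ x < -7), if_pos h2]
  exact ⟨rfl, rfl⟩

lemma dC {x : ℝ} (h1 : 0 ≤ x) (h2 : x < 7) :
    pmpmDensity x = 0.07 ∧ pmpmLabel x = true := by
  unfold pmpmDensity pmpmLabel
  rw [if_neg (by rintro ⟨_, h⟩; linarith), if_neg (by rintro ⟨_, h⟩; linarith),
    if_pos ⟨h1, h2⟩, if_neg (by linarith : ¬ x < -7), if_neg (by linarith : ¬ x < 0),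
    if_pos h2]
  exact ⟨rfl, rfl⟩

lemma dD {x : ℝ} (h1 : 7 ≤ x) (h2 : x ≤ 7.5) :
    pmpmDensity x = 0.02 ∧ pmpmLabel x = false := by
  unfold pmpmDensity pmpmLabel
  rw [if_neg (by rintro ⟨_, h⟩; linarith), if_neg (by rintro ⟨_, h⟩; linarith),
    if_neg (by rintro ⟨_, h⟩; linarith), if_pos ⟨h1, h2⟩,
    if_neg (by linarith : ¬ x < -7), if_neg (by linarith : ¬ x < 0),
    if_neg (by linarith : ¬ x < 7)]
  exact ⟨rfl, rfl⟩

lemma ge_indo {c : ℝ → Bool} {a b k : ℝ}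
    (h : ∀ x, a ≤ x → x < b → pmpmDensity x = k ∧ c x ≠ pmpmLabel x) :
    ∀ x, indo a b k x ≤ eFun c x := by
  intro x
  by_cases hx : x ∈ Ico a b
  · obtain ⟨hd, hne⟩ := h x hx.1 hx.2
    rw [indo, indicator_of_mem hx, eFun_eq hd hne]
  · rw [indo, indicator_of_notMem hx]; exact eFun_nonneg c x

lemma lb_of_indo {c : ℝ → Bool} {a b k : ℝ} (hab : a ≤ b) (hc : Measurable c)
    (h : ∀ x, a ≤ x → x < b → pmpmDensity x = k ∧ c x ≠ pmpmLabel x) :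
    k * (b - a) ≤ classifierErr c := by
  rw [classifierErr_eq]
  calc k * (b - a) = ∫ x, indo a b k x := (indo_integral a b k hab).symm
    _ ≤ ∫ x, eFun c x :=
      integral_mono (indo_integrable a b k) (eFun_integrable hc) (ge_indo h)

/-- the three-threshold classifier matching the pattern has zero error -/
lemma part1 : classifierErr (threeThresholdPred (-7) 0 7 ![true, false, true, false]) = 0 := by
  rw [classifierErr_eq]
  have hfun : ∀ x, eFun (threeThresholdPred (-7) 0 7 ![true, false, true, false]) x = 0 := by
    intro x
    have hcl : threeThresholdPred (-7) 0 7 ![true, false, true, false] x = pmpmLabel x := by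
      unfold threeThresholdPred pmpmLabel
      split_ifs <;> rfl
    simp [eFun, hcl]
  simp only [hfun, integral_zero]

/-- the threshold classifier at 0 with orientation `false` has error exactly 0.02 -/
lemma part3mem : classifierErr (thresholdPred 0 false) = 0.02 := by
  rw [classifierErr_eq]
  have hfun : ∀ x, eFun (thresholdPred 0 false) x =
      indo (-7.5) (-7) 0.02 x + indc 7 7.5 0.02 x := by
    intro x
    simp only [eFun, thresholdPred, Bool.not_false, pmpmLabel, pmpmDensity, indo, indc,
      indicator_apply, mem_Ico, mem_Icc]
    split_ifs <;> (try push_neg at *) <;> simp_all <;> linarith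
  rw [integral_congr_ae (Filter.Eventually.of_forall hfun),
    integral_add (indo_integrable _ _ _) (indc_integrable _ _ _),
    indo_integral _ _ _ (by norm_num), indc_integral _ _ _ (by norm_num)]
  norm_num

/-- every single-threshold classifier has error at least 0.02 -/
lemma part3lb (t : ℝ) (o : Bool) : 0.02 ≤ classifierErr (thresholdPred t o) := by
  cases o with
  | true =>
    rcases le_or_gt t 0 with ht | ht
    · have h := lb_of_indo (by norm_num : (0:ℝ) ≤ 7) (threshold_measurable t true)
        (fun x h1 h2 => by
          obtain ⟨hd, hl⟩ := dC h1 h2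
          refine ⟨hd, ?_⟩
          rw [hl, thresholdPred, if_neg (by linarith : ¬ x < t)]
          simp)
      linarith [h]
    · have h := lb_of_indo (by norm_num : (-7:ℝ) ≤ 0) (threshold_measurable t true)
        (fun x h1 h2 => by
          obtain ⟨hd, hl⟩ := dB h1 h2
          refine ⟨hd, ?_⟩
          rw [hl, thresholdPred, if_pos (by linarith : x < t)]
          simp)
      linarith [h]
  | false =>
    rcases lt_or_ge t (-7) with ht | ht
    · have h := lb_of_indo (by norm_num : (-7:ℝ) ≤ 0) (threshold_measurable t false)
        (fun x h1 h2 => by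
          obtain ⟨hd, hl⟩ := dB h1 h2
          refine ⟨hd, ?_⟩
          rw [hl, thresholdPred, if_neg (by linarith : ¬ x < t)]
          simp)
      linarith [h]
    · rcases le_or_gt t 7 with ht2 | ht2
      · -- error at least mass of A plus mass of D
        have hle : ∀ x, indo (-7.5) (-7) 0.02 x + indc 7 7.5 0.02 x ≤
            eFun (thresholdPred t false) x := by
          intro x
          by_cases hxA : x ∈ Ico (-7.5 : ℝ) (-7)
          · have hxD : x ∉ Icc (7:ℝ) 7.5 := by
              rw [mem_Icc]; rintro ⟨h1, _⟩; exact absurd hxA.2 (by push_neg; linarith)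
            obtain ⟨hd, hl⟩ := dA hxA.1 hxA.2
            rw [indo, indicator_of_mem hxA, indc, indicator_of_notMem hxD, add_zero,
              eFun_eq hd (by
                rw [hl, thresholdPred, if_pos (by linarith [hxA.2] : x < t)]
                simp)]
          · rw [indo, indicator_of_notMem hxA, zero_add]
            by_cases hxD : x ∈ Icc (7:ℝ) 7.5
            · obtain ⟨hd, hl⟩ := dD hxD.1 hxD.2
              rw [indc, indicator_of_mem hxD,
                eFun_eq hd (by
                  rw [hl, thresholdPred, if_neg (by linarith [hxD.1] : ¬ x < t)]
                  simp)]
            · rw [indc, indicator_of_notMem hxD]; exact eFun_nonneg _ x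
        have hint : ∫ x, (indo (-7.5) (-7) 0.02 x + indc 7 7.5 0.02 x) = 0.02 := by
          rw [integral_add (indo_integrable _ _ _) (indc_integrable _ _ _),
            indo_integral _ _ _ (by norm_num), indc_integral _ _ _ (by norm_num)]
          norm_num
        rw [classifierErr_eq]
        calc (0.02 : ℝ) = ∫ x, (indo (-7.5) (-7) 0.02 x + indc 7 7.5 0.02 x) := hint.symm
          _ ≤ ∫ x, eFun (thresholdPred t false) x :=
            integral_mono ((indo_integrable _ _ _).add (indc_integrable _ _ _))
              (eFun_integrable (threshold_measurable t false)) hle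
      · have h := lb_of_indo (by norm_num : (0:ℝ) ≤ 7) (threshold_measurable t false)
          (fun x h1 h2 => by
            obtain ⟨hd, hl⟩ := dC h1 h2
            refine ⟨hd, ?_⟩
            rw [hl, thresholdPred, if_pos (by linarith : x < t)]
            simp)
        linarith [h]

/-- The three-threshold classifier matching the +−+− pattern achieves zero
error; hence the minimal error over three-threshold classifiers is `0`, which
is strictly smaller than the minimal error `0.02` over single-threshold
classifiers. -/
theorem pmpm_three_thresholds_beat_one :
    classifierErr (threeThresholdPred (-7) 0 7 ![true, false, true, false]) = 0 ∧
    sInf {e : ℝ | ∃ t₁ t₂ t₃ l, e = classifierErr (threeThresholdPred t₁ t₂ t₃ l)} = 0 ∧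
    IsLeast {e : ℝ | ∃ t o, e = classifierErr (thresholdPred t o)} 0.02 ∧
    (0 : ℝ) < 0.02 := by
  refine ⟨part1, ?_, ⟨⟨0, false, part3mem.symm⟩, ?_⟩, by norm_num⟩
  · have h0 : (0:ℝ) ∈ {e : ℝ | ∃ t₁ t₂ t₃ l, e = classifierErr (threeThresholdPred t₁ t₂ t₃ l)} :=
      ⟨-7, 0, 7, ![true, false, true, false], part1.symm⟩
    have hlb : ∀ e ∈ {e : ℝ | ∃ t₁ t₂ t₃ l, e = classifierErr (threeThresholdPred t₁ t₂ t₃ l)},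
        (0:ℝ) ≤ e := by
      rintro e ⟨t₁, t₂, t₃, l, rfl⟩
      rw [classifierErr_eq]
      exact integral_nonneg (eFun_nonneg _)
    exact le_antisymm (csInf_le ⟨0, hlb⟩ h0) (le_csInf ⟨0, h0⟩ hlb)
  · rintro e ⟨t, o, rfl⟩
    exact part3lb t o
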